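/- arXiv:0810.1817 — 2 statements merged into one kernel-verified Lean document; each statement's English description precedes it below -/
import Mathlib

section
/- Let h' > 0. Then there exists C > 0 such that for every α ≥ 1 the following holds: if ω : ℂ → ℝ satisfies 0 ≤ ω ≤ 1 on the closed rectangle R_α = {w ∈ ℂ : |Re w| ≤ α, |Im w| ≤ h'}, ω is continuous on R_α except possibly at the four corners, ω is harmonic on the interior of R_α (i.e. C² with vanishing Laplacian, viewing ℂ ≅ ℝ²), ω(w) = 0 for boundary points with |Im w| = h' and |Re w| < α, and ω(w) = 1 for boundary points with |Re w| = α and |Im w| < h', then ω(0) ≥ C · e^{−πα/h'}. -/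
noncomputable section

/-- The horizontal strip `S_m = {w : |Im w| < m/(4π)}`. -/
def Sm (m : ℝ) : Set ℂ := {w : ℂ | |w.im| < m / (4 * Real.pi)}

/-- The set `(ℂ*)^d` of vectors with all coordinates nonzero. -/
def torusPart (d : ℕ) : Set (Fin d → ℂ) := {z | ∀ i, z i ≠ 0}

/-- The multiplicative action of an integer matrix on `(ℂ*)^d`:
`φ_M(z)_i = ∏_j z_j ^ M_{ij}`. -/
def phiM {d : ℕ} (M : Matrix (Fin d) (Fin d) ℤ) (z : Fin d → ℂ) : Fin d → ℂ :=
  fun i => ∏ j, z j ^ (M i j)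

/-- The monomial `z^k = ∏_i z_i ^ k_i` for a row vector `k ∈ ℤ^d`. -/
def zpowVec {d : ℕ} (z : Fin d → ℂ) (k : Fin d → ℤ) : ℂ := ∏ i, z i ^ (k i)

/-- `lam` is a complex eigenvalue of the integer matrix `M`. -/
def IsEig {d : ℕ} (M : Matrix (Fin d) (Fin d) ℤ) (lam : ℂ) : Prop :=
  ((M.map (Int.cast : ℤ → ℂ)).charpoly).IsRoot lam

/-- `ρ(M)`: the max over complex eigenvalues `λ` of `M` of `max |λ| |λ|⁻¹`,
i.e. the max of the spectral radii of `M` and `M⁻¹`. -/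
def rhoM {d : ℕ} (M : Matrix (Fin d) (Fin d) ℤ) : ℝ :=
  sSup {r : ℝ | ∃ lam : ℂ, IsEig M lam ∧ r = max ‖lam‖ ‖lam‖⁻¹}

/-- A Reinhardt domain: a nonempty connected open set stable under coordinatewise
rotations. -/
def IsReinhardt {d : ℕ} (D : Set (Fin d → ℂ)) : Prop :=
  IsOpen D ∧ IsConnected D ∧
    ∀ z ∈ D, ∀ θ : Fin d → ℝ,
      (fun i => Complex.exp ((θ i : ℂ) * Complex.I) * z i) ∈ D

/-- A set `J ⊆ ℤ` has bounded gaps (not bigger than some `l`). -/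
def BddGaps (J : Set ℤ) : Prop :=
  ∃ l : ℕ, ∀ j ∈ J, ∃ j' ∈ J, j' ≠ j ∧ |j - j'| ≤ (l : ℤ)

/-- The Laplacian of `ω : ℂ → ℝ` (viewing `ℂ ≅ ℝ²`) vanishes at each point of `U`:
`∂²ω/∂x² + ∂²ω/∂y² = 0`. -/
def LaplacianZeroOn (ω : ℂ → ℝ) (U : Set ℂ) : Prop :=
  ∀ w ∈ U,
    fderiv ℝ (fun z => fderiv ℝ ω z 1) w 1
      + fderiv ℝ (fun z => fderiv ℝ ω z Complex.I) w Complex.I = 0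

namespace HM14
open Filter Topology

lemma sdt (φ ψ : ℝ → ℝ) (hmin : IsLocalMin φ 0)
    (hd : ∀ᶠ t in 𝓝 (0:ℝ), HasDerivAt φ (ψ t) t) {L : ℝ} (hψ : HasDerivAt ψ L 0) : 0 ≤ L := by
  by_contra hL
  push_neg at hL
  have hψ0 : ψ 0 = 0 := by
    have h1 : deriv φ 0 = ψ 0 := hd.self_of_nhds.deriv
    rw [← h1, hmin.deriv_eq_zero]
  have hslope : Tendsto (slope ψ 0) (𝓝[≠] (0:ℝ)) (𝓝 L) :=
    hasDerivAt_iff_tendsto_slope.mp hψ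
  have hev : ∀ᶠ t in 𝓝[≠] (0:ℝ), slope ψ 0 t < L/2 :=
    hslope.eventually (eventually_lt_nhds (by linarith))
  rw [eventually_nhdsWithin_iff] at hev
  obtain ⟨ε1, hε1, h1⟩ := Metric.eventually_nhds_iff.mp hev
  obtain ⟨ε2, hε2, h2⟩ := Metric.eventually_nhds_iff.mp hd
  obtain ⟨ε3, hε3, h3⟩ := Metric.eventually_nhds_iff.mp hmin
  set δ := min ε1 (min ε2 ε3) / 2 with hδdef
  have hδ : 0 < δ := by positivity
  have hδ1 : δ < ε1 := by
    have := min_le_left ε1 (min ε2 ε3); simp only [hδdef]; linarith [lt_min hε2 hε3]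
  have hδ2 : δ < ε2 := by
    have h := (min_le_right ε1 (min ε2 ε3)).trans (min_le_left ε2 ε3); simp only [hδdef]; linarith
  have hδ3 : δ < ε3 := by
    have h := (min_le_right ε1 (min ε2 ε3)).trans (min_le_right ε2 ε3); simp only [hδdef]; linarith
  have hneg : ∀ t, 0 < t → t ≤ δ → ψ t < 0 := by
    intro t ht htδ
    have hdist : dist t (0:ℝ) < ε1 := by
      simp [Real.dist_eq, abs_of_pos ht]; linarith
    have hs := h1 hdist (by simp [ht.ne'])
    rw [slope_def_field] at hs
    have : (ψ t - 0)/(t - 0) < L/2 := by simpa [hψ0] using hs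
    rw [sub_zero, sub_zero] at this
    have := (div_lt_iff₀ ht).mp this
    nlinarith
  have hder : ∀ t ∈ Set.Icc (0:ℝ) δ, HasDerivAt φ (ψ t) t := by
    intro t ht
    exact h2 (by simp [Real.dist_eq, abs_of_nonneg ht.1]; linarith [ht.2])
  have hcont : ContinuousOn φ (Set.Icc 0 δ) :=
    fun t ht => (hder t ht).continuousAt.continuousWithinAt
  have hanti : StrictAntiOn φ (Set.Icc 0 δ) := by
    apply strictAntiOn_of_deriv_neg (convex_Icc 0 δ) hcont
    intro t ht
    rw [interior_Icc] at ht
    rw [(hder t ⟨ht.1.le, ht.2.le⟩).deriv]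
    exact hneg t ht.1 ht.2.le
  have hlt : φ δ < φ 0 := hanti (Set.left_mem_Icc.mpr hδ.le) (Set.right_mem_Icc.mpr hδ.le) hδ
  have hge : φ 0 ≤ φ δ := h3 (by simp [Real.dist_eq, abs_of_pos hδ]; linarith)
  linarith


lemma key (f : ℂ → ℝ) (z₀ : ℂ) (hf : ContDiffAt ℝ 2 f z₀) (v : ℂ)
    (hmin : IsLocalMin f z₀) :
    0 ≤ fderiv ℝ (fun z => fderiv ℝ f z v) z₀ v := by
  have h1 : ContDiffAt ℝ 1 (fderiv ℝ f) z₀ := hf.fderiv_right (by norm_num)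
  have h2 : HasFDerivAt (fderiv ℝ f) (fderiv ℝ (fderiv ℝ f) z₀) z₀ :=
    (h1.differentiableAt one_ne_zero).hasFDerivAt
  have hF : HasFDerivAt (fun z => fderiv ℝ f z v)
      ((ContinuousLinearMap.apply ℝ ℝ v).comp (fderiv ℝ (fderiv ℝ f) z₀)) z₀ :=
    ((ContinuousLinearMap.apply ℝ ℝ v).hasFDerivAt).comp z₀ h2
  set ℓ : ℝ → ℂ := fun t => z₀ + t • v with hℓdef
  have hℓd : ∀ t : ℝ, HasDerivAt ℓ v t := by
    intro t
    simpa [hℓdef] using ((hasDerivAt_id t).smul_const v).const_add z₀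
  have hℓ0 : ℓ 0 = z₀ := by simp [hℓdef]
  have hℓc : Tendsto ℓ (𝓝 0) (𝓝 z₀) := by
    have : Continuous ℓ := by fun_prop
    simpa [hℓ0] using this.tendsto 0
  set φ : ℝ → ℝ := fun t => f (ℓ t) with hφdef
  set ψ : ℝ → ℝ := fun t => fderiv ℝ f (ℓ t) v with hψdef
  have hev : ∀ᶠ z in 𝓝 z₀, DifferentiableAt ℝ f z := by
    filter_upwards [hf.eventually (by norm_num)] with z hz
    exact hz.differentiableAt (by norm_num)
  have hd : ∀ᶠ t in 𝓝 (0:ℝ), HasDerivAt φ (ψ t) t := by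
    filter_upwards [hℓc.eventually hev] with t ht
    exact (ht.hasFDerivAt).comp_hasDerivAt t (hℓd t)
  have hψL : HasDerivAt ψ
      (((ContinuousLinearMap.apply ℝ ℝ v).comp (fderiv ℝ (fderiv ℝ f) z₀)) v) 0 := by
    have hF' : HasFDerivAt (fun z => fderiv ℝ f z v)
        ((ContinuousLinearMap.apply ℝ ℝ v).comp (fderiv ℝ (fderiv ℝ f) z₀)) (ℓ 0) := by
      rwa [hℓ0]
    simpa [hψdef, Function.comp_def] using hF'.comp_hasDerivAt 0 (hℓd 0)
  have hminφ : IsLocalMin φ 0 := by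
    have : ∀ᶠ t in 𝓝 (0:ℝ), f z₀ ≤ f (ℓ t) := hℓc.eventually hmin
    simpa [IsLocalMin, IsMinFilter, hφdef, hℓ0] using this
  have := sdt φ ψ hminφ hd hψL
  rwa [hF.fderiv]

-- separable product: f(x)·g(y)
lemma hasFDerivAt_sep (f g f' g' : ℝ → ℝ)
    (hf : ∀ x, HasDerivAt f (f' x) x) (hg : ∀ y, HasDerivAt g (g' y) y) (z : ℂ) :
    HasFDerivAt (fun w : ℂ => f w.re * g w.im)
      ((f z.re) • ((g' z.im) • Complex.imCLM) + (g z.im) • ((f' z.re) • Complex.reCLM)) z := by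
  have h1 : HasFDerivAt (fun w : ℂ => f w.re) ((f' z.re) • Complex.reCLM) z :=
    (hf z.re).comp_hasFDerivAt z Complex.reCLM.hasFDerivAt
  have h2 : HasFDerivAt (fun w : ℂ => g w.im) ((g' z.im) • Complex.imCLM) z :=
    (hg z.im).comp_hasFDerivAt z Complex.imCLM.hasFDerivAt
  exact h1.mul h2

lemma eval_one (L : ℂ →L[ℝ] ℝ) (a b : ℝ) (hL : L = a • Complex.reCLM + b • Complex.imCLM) :
    L 1 = a := by simp [hL]

lemma eval_I (L : ℂ →L[ℝ] ℝ) (a b : ℝ) (hL : L = a • Complex.reCLM + b • Complex.imCLM) :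
    L Complex.I = b := by simp [hL]

-- derivative of cosh(c x)
lemma hd_lin (c : ℝ) (x : ℝ) : HasDerivAt (fun y : ℝ => c*y) c x := by
  simpa using (hasDerivAt_id x).const_mul c

lemma hd_cosh (c : ℝ) (x : ℝ) : HasDerivAt (fun x => Real.cosh (c*x)) (Real.sinh (c*x) * c) x := by
  simpa [Function.comp_def] using (Real.hasDerivAt_cosh (c*x)).comp x (hd_lin c x)

lemma hd_sinh (c : ℝ) (x : ℝ) :
    HasDerivAt (fun x => Real.sinh (c*x) * c) (Real.cosh (c*x) * c * c) x := by
  have h : HasDerivAt (fun x => Real.sinh (c*x)) (Real.cosh (c*x) * c) x := by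
    simpa [Function.comp_def] using (Real.hasDerivAt_sinh (c*x)).comp x (hd_lin c x)
  simpa using h.mul_const c

lemma hd_cos (c : ℝ) (y : ℝ) : HasDerivAt (fun y => Real.cos (c*y)) (-Real.sin (c*y) * c) y := by
  simpa [Function.comp_def] using (Real.hasDerivAt_cos (c*y)).comp y (hd_lin c y)

lemma hd_msin (c : ℝ) (y : ℝ) :
    HasDerivAt (fun y => -Real.sin (c*y) * c) (-Real.cos (c*y) * c * c) y := by
  have h : HasDerivAt (fun y => Real.sin (c*y)) (Real.cos (c*y) * c) y := by
    simpa [Function.comp_def] using (Real.hasDerivAt_sin (c*y)).comp y (hd_lin c y)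
  simpa [neg_mul] using (h.neg).mul_const c

lemma hd_sq (x : ℝ) : HasDerivAt (fun x : ℝ => x^2) (2*x) x := by
  simpa using (hasDerivAt_pow 2 x)

lemma hd_twice (x : ℝ) : HasDerivAt (fun x : ℝ => 2*x) 2 x := by
  simpa using (hasDerivAt_id x).const_mul 2

-- sq function
lemma hasFDerivAt_sq (z : ℂ) :
    HasFDerivAt (fun w : ℂ => w.re^2 + w.im^2)
      ((2*z.re) • Complex.reCLM + (2*z.im) • Complex.imCLM) z := by
  have h1 : HasFDerivAt (fun w : ℂ => w.re^2) ((2*z.re) • Complex.reCLM) z :=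
    (hd_sq z.re).comp_hasFDerivAt z Complex.reCLM.hasFDerivAt
  have h2 : HasFDerivAt (fun w : ℂ => w.im^2) ((2*z.im) • Complex.imCLM) z :=
    (hd_sq z.im).comp_hasFDerivAt z Complex.imCLM.hasFDerivAt
  exact h1.add h2

section Bfun
variable (k c ε : ℝ)

noncomputable def B : ℂ → ℝ :=
  fun w => k * (Real.cosh (c*w.re) * Real.cos (c*w.im)) + ε*(w.re^2 + w.im^2)

noncomputable def B1 : ℂ → ℝ :=
  fun w => k * (Real.sinh (c*w.re) * c * Real.cos (c*w.im)) + ε*(2*w.re)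

noncomputable def BI : ℂ → ℝ :=
  fun w => k * (Real.cosh (c*w.re) * (-Real.sin (c*w.im) * c)) + ε*(2*w.im)

lemma hasFDerivAt_B (z : ℂ) :
    HasFDerivAt (B k c ε)
      (k • ((Real.cosh (c*z.re)) • ((-Real.sin (c*z.im) * c) • Complex.imCLM)
          + (Real.cos (c*z.im)) • ((Real.sinh (c*z.re) * c) • Complex.reCLM))
        + ε • ((2*z.re) • Complex.reCLM + (2*z.im) • Complex.imCLM)) z := by
  have h1 := (hasFDerivAt_sep (fun x => Real.cosh (c*x)) (fun y => Real.cos (c*y))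
    (fun x => Real.sinh (c*x) * c) (fun y => -Real.sin (c*y) * c)
    (hd_cosh c) (hd_cos c) z).const_mul k
  have h2 := (hasFDerivAt_sq z).const_mul ε
  exact h1.add h2

lemma fderiv_B_one (z : ℂ) : fderiv ℝ (B k c ε) z 1 = B1 k c ε z := by
  rw [(hasFDerivAt_B k c ε z).fderiv]
  simp only [B1, ContinuousLinearMap.add_apply, ContinuousLinearMap.coe_smul',
    Pi.smul_apply, Complex.reCLM_apply, Complex.imCLM_apply, Complex.one_re,
    Complex.one_im, smul_eq_mul]
  ring

lemma fderiv_B_I (z : ℂ) : fderiv ℝ (B k c ε) z Complex.I = BI k c ε z := by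
  rw [(hasFDerivAt_B k c ε z).fderiv]
  simp only [BI, ContinuousLinearMap.add_apply, ContinuousLinearMap.coe_smul',
    Pi.smul_apply, Complex.reCLM_apply, Complex.imCLM_apply, Complex.I_re,
    Complex.I_im, smul_eq_mul]
  ring

lemma hasFDerivAt_B1 (z : ℂ) :
    HasFDerivAt (B1 k c ε)
      (k • ((Real.sinh (c*z.re) * c) • ((-Real.sin (c*z.im) * c) • Complex.imCLM)
          + (Real.cos (c*z.im)) • ((Real.cosh (c*z.re) * c * c) • Complex.reCLM))
        + ε • ((2:ℝ) • Complex.reCLM)) z := by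
  have h1 := (hasFDerivAt_sep (fun x => Real.sinh (c*x) * c) (fun y => Real.cos (c*y))
    (fun x => Real.cosh (c*x) * c * c) (fun y => -Real.sin (c*y) * c)
    (hd_sinh c) (hd_cos c) z).const_mul k
  have h2 : HasFDerivAt (fun w : ℂ => 2*w.re) ((2:ℝ) • Complex.reCLM) z :=
    (hd_twice z.re).comp_hasFDerivAt z Complex.reCLM.hasFDerivAt
  exact h1.add (h2.const_mul ε)

lemma hasFDerivAt_BI (z : ℂ) :
    HasFDerivAt (BI k c ε)
      (k • ((Real.cosh (c*z.re)) • ((-Real.cos (c*z.im) * c * c) • Complex.imCLM)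
          + (-Real.sin (c*z.im) * c) • ((Real.sinh (c*z.re) * c) • Complex.reCLM))
        + ε • ((2:ℝ) • Complex.imCLM)) z := by
  have h1 := (hasFDerivAt_sep (fun x => Real.cosh (c*x)) (fun y => -Real.sin (c*y) * c)
    (fun x => Real.sinh (c*x) * c) (fun y => -Real.cos (c*y) * c * c)
    (hd_cosh c) (hd_msin c) z).const_mul k
  have h2 : HasFDerivAt (fun w : ℂ => 2*w.im) ((2:ℝ) • Complex.imCLM) z :=
    (hd_twice z.im).comp_hasFDerivAt z Complex.imCLM.hasFDerivAt
  exact h1.add (h2.const_mul ε)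

-- the Laplacian of B is 4ε
lemma lap_B (z₀ : ℂ) :
    fderiv ℝ (fun z => fderiv ℝ (B k c ε) z 1) z₀ 1
      + fderiv ℝ (fun z => fderiv ℝ (B k c ε) z Complex.I) z₀ Complex.I = 4*ε := by
  have e1 : (fun z => fderiv ℝ (B k c ε) z 1) = B1 k c ε := funext (fderiv_B_one k c ε)
  have e2 : (fun z => fderiv ℝ (B k c ε) z Complex.I) = BI k c ε := funext (fderiv_B_I k c ε)
  rw [e1, e2, (hasFDerivAt_B1 k c ε z₀).fderiv, (hasFDerivAt_BI k c ε z₀).fderiv]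
  simp only [ContinuousLinearMap.add_apply, ContinuousLinearMap.coe_smul',
    Pi.smul_apply, Complex.reCLM_apply, Complex.imCLM_apply, Complex.one_re,
    Complex.one_im, Complex.I_re, Complex.I_im, smul_eq_mul]
  ring
end Bfun

lemma diffAt_fderiv_apply (g : ℂ → ℝ) (z₀ : ℂ) (hg : ContDiffAt ℝ 2 g z₀) (v : ℂ) :
    DifferentiableAt ℝ (fun z => fderiv ℝ g z v) z₀ := by
  have h1 : ContDiffAt ℝ 1 (fderiv ℝ g) z₀ := hg.fderiv_right (by norm_num)
  have h2 : HasFDerivAt (fderiv ℝ g) (fderiv ℝ (fderiv ℝ g) z₀) z₀ :=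
    (h1.differentiableAt one_ne_zero).hasFDerivAt
  exact (((ContinuousLinearMap.apply ℝ ℝ v).hasFDerivAt).comp z₀ h2).differentiableAt

lemma lap_decomp (ω Bf : ℂ → ℝ) (U : Set ℂ) (hU : IsOpen U) (z₀ : ℂ) (hz₀ : z₀ ∈ U)
    (hω : ContDiffOn ℝ 2 ω U) (hB : Differentiable ℝ Bf)
    (v : ℂ) (hBv : DifferentiableAt ℝ (fun z => fderiv ℝ Bf z v) z₀) :
    fderiv ℝ (fun z => fderiv ℝ (fun w => ω w - Bf w) z v) z₀ v
      = fderiv ℝ (fun z => fderiv ℝ ω z v) z₀ v - fderiv ℝ (fun z => fderiv ℝ Bf z v) z₀ v := by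
  have hωAt : ∀ z ∈ U, ContDiffAt ℝ 2 ω z := fun z hz => hω.contDiffAt (hU.mem_nhds hz)
  have hev : (fun z => fderiv ℝ (fun w => ω w - Bf w) z v)
      =ᶠ[nhds z₀] (fun z => fderiv ℝ ω z v - fderiv ℝ Bf z v) := by
    filter_upwards [hU.mem_nhds hz₀] with z hz
    have hωd : DifferentiableAt ℝ ω z := (hωAt z hz).differentiableAt (by norm_num)
    rw [fderiv_fun_sub hωd (hB z), ContinuousLinearMap.sub_apply]
  rw [hev.fderiv_eq]
  have h1 : DifferentiableAt ℝ (fun z => fderiv ℝ ω z v) z₀ :=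
    diffAt_fderiv_apply ω z₀ (hωAt z₀ hz₀) v
  rw [fderiv_fun_sub h1 hBv, ContinuousLinearMap.sub_apply]

end HM14

/-- Lower bound for the harmonic measure of the vertical sides of the rectangle
`R_α = {|Re w| ≤ α, |Im w| ≤ h'}` at the origin: `ω(0) ≥ C e^{−πα/h'}` with `C`
independent of `α ≥ 1`. -/
theorem stmt_14 (h' : ℝ) (hh' : 0 < h') :
    ∃ C > (0 : ℝ), ∀ α : ℝ, 1 ≤ α →
      ∀ ω : ℂ → ℝ,
        (∀ w : ℂ, |w.re| ≤ α → |w.im| ≤ h' → 0 ≤ ω w ∧ ω w ≤ 1) →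
        ContinuousOn ω ({w : ℂ | |w.re| ≤ α ∧ |w.im| ≤ h'}
          \ {w : ℂ | |w.re| = α ∧ |w.im| = h'}) →
        ContDiffOn ℝ 2 ω {w : ℂ | |w.re| < α ∧ |w.im| < h'} →
        LaplacianZeroOn ω {w : ℂ | |w.re| < α ∧ |w.im| < h'} →
        (∀ w : ℂ, |w.im| = h' → |w.re| < α → ω w = 0) →
        (∀ w : ℂ, |w.re| = α → |w.im| < h' → ω w = 1) →
        ω 0 ≥ C * Real.exp (-(Real.pi * α) / h') := by
  refine ⟨1, one_pos, ?_⟩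
  intro α hα ω hbnd hcont hC2 hLap htop hside
  have hπ : 0 < Real.pi := Real.pi_pos
  have hα0 : (0:ℝ) < α := lt_of_lt_of_le one_pos hα
  set c : ℝ := Real.pi / h' with hc
  have hc0 : 0 < c := div_pos hπ hh'
  set k : ℝ := (Real.cosh (c*α))⁻¹ with hk
  have hcosh0 : 0 < Real.cosh (c*α) := Real.cosh_pos _
  have hk0 : 0 < k := inv_pos.mpr hcosh0
  set U : Set ℂ := {w : ℂ | |w.re| < α ∧ |w.im| < h'} with hUdef
  set U' : Set ℂ := {w : ℂ | |w.re| < α ∧ |w.im| < h'/2} with hU'def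
  set K : Set ℂ := {w : ℂ | |w.re| ≤ α ∧ |w.im| ≤ h'/2} with hKdef
  have hUopen : IsOpen U :=
    (isOpen_lt (continuous_abs.comp Complex.continuous_re) continuous_const).and
      (isOpen_lt (continuous_abs.comp Complex.continuous_im) continuous_const)
  have hU'open : IsOpen U' :=
    (isOpen_lt (continuous_abs.comp Complex.continuous_re) continuous_const).and
      (isOpen_lt (continuous_abs.comp Complex.continuous_im) continuous_const)
  have hU'K : U' ⊆ K := fun z hz => ⟨hz.1.le, hz.2.le⟩
  have hU'U : U' ⊆ U := fun z hz => ⟨hz.1, lt_of_lt_of_le hz.2 (by linarith)⟩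
  set M : ℝ := α^2 + h'^2 with hM
  have hM0 : 0 < M := by positivity
  -- the compact rectangle
  have hKclosed : IsClosed K :=
    (isClosed_le (continuous_abs.comp Complex.continuous_re) continuous_const).inter
      (isClosed_le (continuous_abs.comp Complex.continuous_im) continuous_const)
  have hKcpt : IsCompact K := by
    apply Metric.isCompact_of_isClosed_isBounded hKclosed
    rw [isBounded_iff_forall_norm_le]
    refine ⟨α + h', fun z hz => ?_⟩
    calc ‖z‖ = ‖z‖ := rfl
      _ ≤ |z.re| + |z.im| := Complex.norm_le_abs_re_add_abs_im z
      _ ≤ α + h' := by have := hz.1; have := hz.2; linarith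
  have h0K : (0:ℂ) ∈ K := by
    constructor
    · simp only [Complex.zero_re, abs_zero]; linarith
    · simp only [Complex.zero_im, abs_zero]; positivity
  have hKne : K.Nonempty := ⟨0, h0K⟩
  have hωcontK : ContinuousOn ω K := by
    apply hcont.mono
    intro z hz
    refine ⟨⟨hz.1, hz.2.trans (by linarith)⟩, fun hcorner => ?_⟩
    have := hcorner.2
    have := hz.2
    linarith
  -- key step: for every ε > 0, k - ε * M ≤ ω 0
  have step : ∀ ε : ℝ, 0 < ε → k - ε*M ≤ ω 0 := by
    intro ε hε
    have hBC2 : ContDiff ℝ 2 (HM14.B k c ε) := by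
      apply ContDiff.add
      · apply contDiff_const.mul
        apply ContDiff.mul
        · exact Real.contDiff_cosh.comp (contDiff_const.mul Complex.reCLM.contDiff)
        · exact Real.contDiff_cos.comp (contDiff_const.mul Complex.imCLM.contDiff)
      · exact contDiff_const.mul
          ((Complex.reCLM.contDiff.pow 2).add (Complex.imCLM.contDiff.pow 2))
    have hfcont : ContinuousOn (fun w => ω w - HM14.B k c ε w) K :=
      hωcontK.sub hBC2.continuous.continuousOn
    obtain ⟨z₀, hz₀K, hz₀min⟩ := hKcpt.exists_isMinOn hKne hfcont
    -- the minimum is not interior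
    have hz₀not : z₀ ∉ U' := by
      intro hzU'
      have hzU : z₀ ∈ U := hU'U hzU'
      have hlocmin : IsLocalMin (fun w => ω w - HM14.B k c ε w) z₀ :=
        hz₀min.isLocalMin (Filter.mem_of_superset (hU'open.mem_nhds hzU') hU'K)
      have hωC2 : ContDiffAt ℝ 2 ω z₀ := hC2.contDiffAt (hUopen.mem_nhds hzU)
      have hfC2 : ContDiffAt ℝ 2 (fun w => ω w - HM14.B k c ε w) z₀ :=
        hωC2.sub hBC2.contDiffAt
      have hQ1 := HM14.key (fun w => ω w - HM14.B k c ε w) z₀ hfC2 1 hlocmin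
      have hQI := HM14.key (fun w => ω w - HM14.B k c ε w) z₀ hfC2 Complex.I hlocmin
      have hBdiff : Differentiable ℝ (HM14.B k c ε) :=
        fun z => (HM14.hasFDerivAt_B k c ε z).differentiableAt
      have hB1d : DifferentiableAt ℝ (fun z => fderiv ℝ (HM14.B k c ε) z 1) z₀ := by
        have e1 : (fun z => fderiv ℝ (HM14.B k c ε) z 1) = HM14.B1 k c ε :=
          funext (HM14.fderiv_B_one k c ε)
        rw [e1]; exact (HM14.hasFDerivAt_B1 k c ε z₀).differentiableAt
      have hBId : DifferentiableAt ℝ (fun z => fderiv ℝ (HM14.B k c ε) z Complex.I) z₀ := by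
        have e2 : (fun z => fderiv ℝ (HM14.B k c ε) z Complex.I) = HM14.BI k c ε :=
          funext (HM14.fderiv_B_I k c ε)
        rw [e2]; exact (HM14.hasFDerivAt_BI k c ε z₀).differentiableAt
      have hd1 := HM14.lap_decomp ω (HM14.B k c ε) U hUopen z₀ hzU hC2 hBdiff 1 hB1d
      have hdI := HM14.lap_decomp ω (HM14.B k c ε) U hUopen z₀ hzU hC2 hBdiff
        Complex.I hBId
      have hLap0 := hLap z₀ hzU
      have hlapB := HM14.lap_B k c ε z₀
      rw [hd1] at hQ1
      rw [hdI] at hQI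
      linarith
    -- hence it is on the boundary, where f ≥ -ε M
    have hsq : z₀.re^2 + z₀.im^2 ≤ M := by
      have h1 : z₀.re^2 ≤ α^2 := by
        nlinarith [sq_abs z₀.re, hz₀K.1, abs_nonneg z₀.re]
      have h2 : z₀.im^2 ≤ h'^2 := by
        nlinarith [sq_abs z₀.im, hz₀K.2, abs_nonneg z₀.im]
      rw [hM]; linarith
    have hεsq : ε*(z₀.re^2 + z₀.im^2) ≤ ε*M := by
      exact mul_le_mul_of_nonneg_left hsq hε.le
    have hbcases : |z₀.re| = α ∨ |z₀.im| = h'/2 := by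
      by_contra hcon
      push_neg at hcon
      exact hz₀not ⟨lt_of_le_of_ne hz₀K.1 hcon.1, lt_of_le_of_ne hz₀K.2 hcon.2⟩
    have hlow : -(ε*M) ≤ ω z₀ - HM14.B k c ε z₀ := by
      rcases hbcases with hre | him
      · -- vertical side: ω = 1, B ≤ 1 + ε sq
        have him' : |z₀.im| < h' := lt_of_le_of_lt hz₀K.2 (by linarith)
        have hω1 : ω z₀ = 1 := hside z₀ hre him'
        have hcosh : Real.cosh (c*z₀.re) = Real.cosh (c*α) := by
          rw [← Real.cosh_abs, abs_mul, abs_of_pos hc0, hre]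
        have hcos1 : Real.cos (c*z₀.im) ≤ 1 := Real.cos_le_one _
        have hBle : HM14.B k c ε z₀ ≤ 1 + ε*(z₀.re^2 + z₀.im^2) := by
          unfold HM14.B
          rw [hcosh]
          have hkcosh : k * Real.cosh (c*α) = 1 := inv_mul_cancel₀ hcosh0.ne'
          have : k * (Real.cosh (c*α) * Real.cos (c*z₀.im)) = Real.cos (c*z₀.im) := by
            rw [← mul_assoc, hkcosh, one_mul]
          rw [this]
          linarith
        rw [hω1]
        linarith
      · -- horizontal side: cos vanishes, ω ≥ 0
        have hcos : Real.cos (c*z₀.im) = 0 := by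
          have hch : c * (h'/2) = Real.pi/2 := by
            rw [hc]; field_simp
          rcases (abs_eq (by positivity : (0:ℝ) ≤ h'/2)).mp him with h | h
          · rw [h, hch, Real.cos_pi_div_two]
          · rw [h, mul_neg, hch, Real.cos_neg, Real.cos_pi_div_two]
        have hω0 : 0 ≤ ω z₀ :=
          (hbnd z₀ hz₀K.1 (hz₀K.2.trans (by linarith))).1
        have hBeq : HM14.B k c ε z₀ = ε*(z₀.re^2 + z₀.im^2) := by
          unfold HM14.B
          rw [hcos]
          ring
        rw [hBeq]
        linarith
    have hmin0 : ω z₀ - HM14.B k c ε z₀ ≤ ω 0 - HM14.B k c ε 0 := hz₀min h0K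
    have hB0 : HM14.B k c ε 0 = k := by
      unfold HM14.B
      simp [Real.cosh_zero, Real.cos_zero]
    rw [hB0] at hmin0
    have : -(ε*M) ≤ ω 0 - k := le_trans hlow hmin0
    linarith
  -- conclude ω 0 ≥ k
  have hωk : k ≤ ω 0 := by
    apply le_of_forall_pos_le_add
    intro δ hδ
    have := step (δ/M) (by positivity)
    have hcalc : (δ/M)*M = δ := by field_simp
    rw [hcalc] at this
    linarith
  -- and k ≥ exp(-πα/h')
  have h1 : Real.cosh (c*α) ≤ Real.exp (c*α) := by
    rw [Real.cosh_eq]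
    have h2 : Real.exp (-(c*α)) ≤ Real.exp (c*α) := by
      apply Real.exp_le_exp.mpr
      nlinarith
    linarith
  have h2 : Real.exp (-(c*α)) ≤ k := by
    rw [hk, Real.exp_neg]
    exact inv_anti₀ hcosh0 h1
  have h3 : -(Real.pi * α) / h' = -(c*α) := by
    rw [hc]; field_simp
  rw [ge_iff_le, one_mul, h3]
  exact le_trans h2 hωk
end
end

section
/- Let d ≥ 2 and let M ∈ GL_d(ℤ) with ρ(M) > 1 and characteristic polynomial irreducible over ℚ. Let μ₊ = log(max{|λ| : λ complex eigenvalue of M}) and let k ∈ ℤ^d be any nonzero vector. Then there exist z₊ ∈ (ℂ*)^d, δ > 0, and an infinite set J₊ ⊆ ℕ with bounded gaps such that |z₊^{j.k}| > exp(δ · e^{j μ₊}) for all j ∈ J₊. -/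
noncomputable section

section Helpers
open Real Polynomial Matrix


lemma half_le_cos_of_abs_le {t : ℝ} (h : |t| ≤ π/3) : 1/2 ≤ Real.cos t := by
  rw [← Real.cos_abs, ← Real.cos_pi_div_three]
  exact Real.cos_le_cos_of_nonneg_of_le_pi (abs_nonneg t) (by linarith [Real.pi_pos]) h

lemma exists_q (θ : ℝ) : ∃ q : ℕ, 1 ≤ q ∧ q ≤ 6 ∧ 1/2 ≤ Real.cos (q * θ) := by
  have hπ := Real.pi_pos
  set β := θ / (2 * π) with hβ
  have hθ : θ = 2 * π * β := by rw [hβ]; field_simp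
  have hmaps : ∀ j ∈ Finset.range 7, (⌊6 * Int.fract ((j:ℝ) * β)⌋ : ℤ) ∈ Finset.Ico (0:ℤ) 6 := by
    intro j _
    have h0 := Int.fract_nonneg ((j:ℝ) * β)
    have h1 := Int.fract_lt_one ((j:ℝ) * β)
    rw [Finset.mem_Ico]
    exact ⟨Int.floor_nonneg.mpr (by linarith), Int.floor_lt.mpr (by push_cast; linarith)⟩
  obtain ⟨a, ha, b, hb, hab, heq⟩ := Finset.exists_ne_map_eq_of_card_lt_of_maps_to
    (by simp : (Finset.Ico (0:ℤ) 6).card < (Finset.range 7).card) hmaps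
  wlog hlt : a < b generalizing a b
  · exact this b hb a ha hab.symm heq.symm (by omega)
  refine ⟨b - a, by omega, by simp at ha hb; omega, ?_⟩
  set x := Int.fract ((a:ℝ) * β)
  set y := Int.fract ((b:ℝ) * β)
  have hxy : |y - x| < 1/6 := by
    have h1 : (⌊6*x⌋ : ℝ) ≤ 6*x := Int.floor_le _
    have h2 : 6*x < ⌊6*x⌋ + 1 := Int.lt_floor_add_one _
    have h3 : (⌊6*y⌋ : ℝ) ≤ 6*y := Int.floor_le _
    have h4 : 6*y < ⌊6*y⌋ + 1 := Int.lt_floor_add_one _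
    have h5 : (⌊6*x⌋ : ℝ) = (⌊6*y⌋ : ℝ) := by exact_mod_cast heq
    rw [abs_lt]; constructor <;> nlinarith
  have hq : ((b - a : ℕ) : ℝ) * β = (y - x) + (⌊(b:ℝ)*β⌋ - ⌊(a:ℝ)*β⌋) := by
    have hba : ((b - a : ℕ) : ℝ) = (b:ℝ) - a := by
      push_cast [Nat.cast_sub hlt.le]; ring
    rw [hba]
    have hx : x = (a:ℝ)*β - ⌊(a:ℝ)*β⌋ := rfl
    have hy : y = (b:ℝ)*β - ⌊(b:ℝ)*β⌋ := rfl
    rw [hx, hy]; ring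
  have key : ((b-a:ℕ):ℝ) * θ = 2*π*(y-x) + ((⌊(b:ℝ)*β⌋ - ⌊(a:ℝ)*β⌋ : ℤ):ℝ) * (2*π) := by
    rw [hθ]; push_cast at hq ⊢; nlinarith [hq]
  rw [key, Real.cos_add_int_mul_two_pi]
  apply half_le_cos_of_abs_le
  rw [abs_mul, abs_of_pos (by linarith : (0:ℝ) < 2*π)]
  nlinarith [hxy, abs_nonneg (y-x)]


lemma exists_seq (θ : ℝ) : ∃ (f : ℕ → ℤ) (L : ℕ), StrictMono f ∧ (∀ m, 0 ≤ f m) ∧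
    (∀ m, f (m+1) - f m ≤ (L:ℤ)) ∧ ∀ m, 1/2 ≤ Real.cos ((f m : ℝ) * θ) := by
  have hπ := Real.pi_pos
  obtain ⟨q, hq1, hq6, hqcos⟩ := exists_q θ
  set r : ℤ := round ((q:ℝ) * θ / (2 * π)) with hr
  set s : ℝ := (q:ℝ) * θ - r * (2*π) with hs
  have hcss : Real.cos s = Real.cos ((q:ℝ)*θ) := by
    rw [hs, Real.cos_sub_int_mul_two_pi]
  have hsπ : |s| ≤ π := by
    have h1 : |(q:ℝ) * θ / (2*π) - r| ≤ 1/2 := abs_sub_round _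
    have : s = ((q:ℝ) * θ / (2*π) - r) * (2*π) := by rw [hs]; field_simp; try ring
    rw [this, abs_mul, abs_of_pos (by linarith : (0:ℝ) < 2*π)]
    nlinarith [abs_nonneg ((q:ℝ) * θ / (2*π) - r)]
  have hsπ3 : |s| ≤ π/3 := by
    by_contra hcon
    push_neg at hcon
    have : Real.cos |s| < Real.cos (π/3) :=
      Real.cos_lt_cos_of_nonneg_of_le_pi (by linarith) hsπ hcon
    rw [Real.cos_abs, Real.cos_pi_div_three, hcss] at this
    linarith
  by_cases hs0 : s = 0
  · -- periodic case
    refine ⟨fun m => (q:ℤ) * m, q, ?_, ?_, ?_, ?_⟩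
    · intro m m' hm; have : (1:ℤ) ≤ q := by exact_mod_cast hq1
      simp only []; nlinarith [hm]
    · intro m; positivity
    · intro m; push_cast; ring_nf; omega
    · intro m
      have hqθ : (q:ℝ) * θ = r * (2*π) := by rw [hs] at hs0; linarith
      show (1:ℝ)/2 ≤ Real.cos ((((q:ℤ) * (m:ℤ) : ℤ):ℝ) * θ)
      have heq2 : (((q:ℤ) * (m:ℤ) : ℤ):ℝ) * θ = ((m * r : ℤ):ℝ) * (2*π) := by
        push_cast; linear_combination (m:ℝ) * hqθ
      rw [heq2, Real.cos_int_mul_two_pi]; norm_num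
  · -- stepping case
    set s' : ℝ := |s| with hs'
    have hs'0 : 0 < s' := abs_pos.mpr hs0
    set n : ℕ → ℕ := fun m => ⌈(2*π*m)/s'⌉₊ with hn
    have hge : ∀ m : ℕ, 2*π*m ≤ n m * s' := by
      intro m
      have := Nat.le_ceil ((2*π*m)/s')
      rw [div_le_iff₀ hs'0] at this
      exact this
    have hlt : ∀ m : ℕ, (n m : ℝ) * s' < 2*π*m + s' := by
      intro m
      have h1 : (⌈(2*π*m)/s'⌉₊ : ℝ) < (2*π*m)/s' + 1 :=
        Nat.ceil_lt_add_one (by positivity)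
      calc (n m : ℝ) * s' < ((2*π*m)/s' + 1) * s' := by
            apply mul_lt_mul_of_pos_right h1 hs'0
        _ = 2*π*m + s' := by field_simp
    have hmono : StrictMono n := by
      apply strictMono_nat_of_lt_succ
      intro m
      have h1 := hlt m
      have h2 := hge (m+1)
      have : (n m : ℝ) < n (m+1) := by
        push_cast at h2 ⊢
        nlinarith [hsπ3]
      exact_mod_cast this
    set C : ℕ := ⌈2*π/s'⌉₊ + 1 with hC
    refine ⟨fun m => (q:ℤ) * (n m : ℤ), q * C, ?_, ?_, ?_, ?_⟩
    · intro m m' hm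
      have h1 : (1:ℤ) ≤ q := by exact_mod_cast hq1
      have h2 : (n m : ℤ) < n m' := by exact_mod_cast hmono hm
      simp only []; nlinarith
    · intro m; positivity
    · intro m
      have hgap : (n (m+1) : ℝ) ≤ n m + C := by
        have h1 := hlt (m+1)
        have h2 := hge m
        have h3 : 2*π/s' ≤ (⌈2*π/s'⌉₊ : ℝ) := Nat.le_ceil _
        push_cast [hC]
        rw [div_le_iff₀ hs'0] at h3
        have : (n (m+1) : ℝ) * s' < (n m : ℝ) * s' + (⌈2*π/s'⌉₊ : ℝ) * s' + s' := by
          push_cast at h1 h2 ⊢; nlinarith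
        nlinarith
      have hgap' : (n (m+1) : ℤ) ≤ n m + C := by exact_mod_cast hgap
      have h1 : (1:ℤ) ≤ q := by exact_mod_cast hq1
      have h0 : (0:ℤ) ≤ q := by positivity
      have h2 := mul_le_mul_of_nonneg_left hgap' h0
      push_cast [hC] at h2 ⊢
      nlinarith [h2]
    · intro m
      -- cos((q * n m) * θ) ≥ 1/2
      have key : (((q:ℤ) * (n m : ℤ) : ℤ) : ℝ) * θ = (n m : ℝ) * s + ((n m * r : ℤ):ℝ) * (2*π) := by
        push_cast
        rw [hs]; ring
      rw [key, Real.cos_add_int_mul_two_pi]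
      have habs : Real.cos ((n m : ℝ) * s) = Real.cos ((n m : ℝ) * s') := by
        rw [← Real.cos_abs ((n m : ℝ) * s), abs_mul, Nat.abs_cast, hs']
      rw [habs]
      have key2 : (n m : ℝ) * s' = ((n m : ℝ) * s' - 2*π*m) + ((m:ℤ):ℝ) * (2*π) := by
        push_cast; ring
      rw [key2, Real.cos_add_int_mul_two_pi]
      apply half_le_cos_of_abs_le
      rw [abs_le]
      constructor
      · have := hge m; linarith
      · have := hlt m; linarith


-- eval of charpoly
lemma eval_charpoly' {n : Type*} [Fintype n] [DecidableEq n] {R : Type*} [CommRing R]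
    (A : Matrix n n R) (x : R) :
    A.charpoly.eval x = (x • (1 : Matrix n n R) - A).det := by
  rw [Matrix.charpoly, ← Polynomial.coe_evalRingHom, RingHom.map_det]
  congr 1
  ext i j
  by_cases h : i = j <;>
    simp [h, Matrix.charmatrix_apply, Matrix.one_apply, Matrix.diagonal_apply]

-- eigenvector existence
lemma exists_eigvec {n : Type*} [Fintype n] [DecidableEq n] (A : Matrix n n ℂ) (x : ℂ)
    (h : A.charpoly.IsRoot x) : ∃ v ≠ 0, A.mulVec v = x • v := by
  have hdet : (x • (1 : Matrix n n ℂ) - A).det = 0 := by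
    rw [← eval_charpoly']; exact h
  obtain ⟨v, hv, hveq⟩ := Matrix.exists_mulVec_eq_zero_iff.mpr hdet
  refine ⟨v, hv, ?_⟩
  have := hveq
  rw [Matrix.sub_mulVec, Matrix.smul_mulVec, Matrix.one_mulVec, sub_eq_zero] at this
  exact this.symm


-- cast a vecMul through a ring hom
lemma vecMul_map_comm {d : ℕ} {R S : Type*} [CommRing R] [CommRing S] (f : R →+* S)
    (v : Fin d → R) (A : Matrix (Fin d) (Fin d) R) (j : Fin d) :
    f ((v ᵥ* A) j) = ((fun i => f (v i)) ᵥ* (A.map f)) j := by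
  simp [Matrix.vecMul, dotProduct, map_sum, Matrix.map_apply]

lemma map_matrix_pow {d : ℕ} {R S : Type*} [CommRing R] [CommRing S] (f : R →+* S)
    (A : Matrix (Fin d) (Fin d) R) (n : ℕ) : (A ^ n).map f = (A.map f) ^ n := by
  have := map_pow (f.mapMatrix) A n
  simpa [RingHom.mapMatrix_apply] using this

lemma aeval_unit_of_degree_lt {d : ℕ} (hd : 2 ≤ d) (Mq : Matrix (Fin d) (Fin d) ℚ)
    (hirr : Irreducible Mq.charpoly) (p : ℚ[X]) (hp0 : p ≠ 0) (hpd : p.natDegree < d) :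
    IsUnit (Polynomial.aeval Mq p) := by
  have hnd : Mq.charpoly.natDegree = d := by
    rw [Matrix.charpoly_natDegree_eq_dim, Fintype.card_fin]
  have hdvd : ¬ Mq.charpoly ∣ p := by
    intro h
    have := Polynomial.natDegree_le_of_dvd h hp0
    omega
  obtain ⟨a, b, hab⟩ := hirr.coprime_iff_not_dvd.mpr hdvd
  have h2 := congrArg (Polynomial.aeval Mq) hab
  simp only [_root_.map_add, _root_.map_mul, _root_.map_one, Matrix.aeval_self_charpoly, mul_zero, zero_add] at h2
  have h3 : Polynomial.aeval Mq p * Polynomial.aeval Mq b = 1 := mul_eq_one_comm.mp h2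
  exact isUnit_iff_exists.mpr ⟨_, h3, h2⟩

lemma dot_ne_zero {d : ℕ} (hd : 2 ≤ d) (Mz : Matrix (Fin d) (Fin d) ℤ)
    (hirr : Irreducible (Mz.charpoly.map (Int.castRingHom ℚ)))
    (k : Fin d → ℤ) (hk : k ≠ 0) (lam : ℂ) (u : Fin d → ℂ) (hu : u ≠ 0)
    (heig : (Mz.map (Int.cast : ℤ → ℂ)) *ᵥ u = lam • u) :
    (fun i => (k i : ℂ)) ⬝ᵥ u ≠ 0 := by
  set Mq : Matrix (Fin d) (Fin d) ℚ := Mz.map (Int.castRingHom ℚ) with hMq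
  set Mc : Matrix (Fin d) (Fin d) ℂ := Mz.map (Int.cast : ℤ → ℂ) with hMc
  have hirr' : Irreducible Mq.charpoly := by
    rwa [hMq, Matrix.charpoly_map]
  set kq : Fin d → ℚ := fun i => (k i : ℚ) with hkq
  set kc : Fin d → ℂ := fun i => (k i : ℂ) with hkc
  set A : Matrix (Fin d) (Fin d) ℚ := Matrix.of (fun i j => (kq ᵥ* (Mq ^ (i : ℕ))) j) with hA
  -- A has nonzero determinant
  have hdetA : A.det ≠ 0 := by
    intro hdet
    obtain ⟨a, ha0, haA⟩ := Matrix.exists_vecMul_eq_zero_iff.mpr hdet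
    set p : ℚ[X] := ∑ i : Fin d, Polynomial.monomial (i : ℕ) (a i) with hp
    have hp0 : p ≠ 0 := by
      obtain ⟨i, hi⟩ := Function.ne_iff.mp ha0
      intro h
      have hc : p.coeff (i : ℕ) = a i := by
        rw [hp, Polynomial.finset_sum_coeff]
        rw [Finset.sum_eq_single i]
        · simp [Polynomial.coeff_monomial]
        · intro i' _ hne
          rw [Polynomial.coeff_monomial, if_neg (by simpa [Fin.val_eq_val] using hne)]
        · simp
      rw [h] at hc
      simp at hc
      exact hi hc.symm
    have hpd : p.natDegree < d := by
      have : p.natDegree ≤ d - 1 := by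
        apply Polynomial.natDegree_sum_le_of_forall_le
        intro i _
        exact le_trans (Polynomial.natDegree_monomial_le _) (by omega)
      omega
    have hunit := aeval_unit_of_degree_lt hd Mq hirr' p hp0 hpd
    have hzero : kq ᵥ* (Polynomial.aeval Mq p) = 0 := by
      have hv : kq ᵥ* (Polynomial.aeval Mq p) = a ᵥ* A := by
        funext j
        have hexp : Polynomial.aeval Mq p = ∑ i : Fin d, a i • Mq ^ (i : ℕ) := by
          rw [hp, map_sum]
          congr 1
          funext i
          rw [Polynomial.aeval_monomial, Algebra.smul_def]
        rw [hexp]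
        simp only [Matrix.vecMul, dotProduct, Matrix.sum_apply, Matrix.smul_apply,
          Matrix.of_apply, hA, Finset.mul_sum, smul_eq_mul]
        rw [Finset.sum_comm]
        congr 1
        funext i
        congr 1
        funext l
        ring
      rw [hv, haA]
    obtain ⟨B, hB⟩ := hunit.exists_right_inv
    have : kq = 0 := by
      have h1 : kq ᵥ* ((Polynomial.aeval Mq p) * B) = kq := by rw [hB, Matrix.vecMul_one]
      rw [← Matrix.vecMul_vecMul, hzero, Matrix.zero_vecMul] at h1
      exact h1.symm
    apply hk
    funext i
    have := congrFun this i
    simpa [hkq] using this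
  -- now the complex side
  intro hc
  set f : ℚ →+* ℂ := algebraMap ℚ ℂ with hf
  set Ac : Matrix (Fin d) (Fin d) ℂ := A.map f with hAc
  have hdetAc : Ac.det ≠ 0 := by
    rw [hAc, ← RingHom.mapMatrix_apply, ← RingHom.map_det]
    simpa using hdetA
  have hMqMc : Mq.map f = Mc := by
    rw [hMq, hMc, Matrix.map_map]
    congr 1
    all_goals first | rfl | (funext x; simp [hf])
  have heigpow : ∀ n : ℕ, (Mc ^ n) *ᵥ u = lam ^ n • u := by
    intro n
    induction n with
    | zero => simp
    | succ n ih =>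
      rw [pow_succ, ← Matrix.mulVec_mulVec, heig, Matrix.mulVec_smul, ih, smul_smul, pow_succ]
      rw [mul_comm]
  have hmv : Ac *ᵥ u = 0 := by
    funext i
    have hrow : ∀ j, Ac i j = (kc ᵥ* (Mc ^ (i : ℕ))) j := by
      intro j
      show f (A i j) = _
      have h1 : A i j = (kq ᵥ* (Mq ^ (i : ℕ))) j := rfl
      rw [h1, vecMul_map_comm f kq (Mq ^ (i : ℕ)) j, map_matrix_pow, hMqMc]
      congr 1
      all_goals (funext l; simp [hkq, hkc, hf])
    have : (Ac *ᵥ u) i = (kc ᵥ* (Mc ^ (i : ℕ))) ⬝ᵥ u := by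
      simp only [Matrix.mulVec, dotProduct]
      congr 1
      funext j
      rw [hrow j]
    rw [this, ← Matrix.dotProduct_mulVec, heigpow, dotProduct_smul, hc, smul_zero]
    rfl
  exact hdetAc (Matrix.exists_mulVec_eq_zero_iff.mp ⟨u, hu, hmv⟩)

lemma real_exp_zpow (x : ℝ) (n : ℤ) : Real.exp x ^ n = Real.exp (n * x) := by
  obtain ⟨m, rfl | rfl⟩ := Int.eq_nat_or_neg n
  · rw [zpow_natCast, ← Real.exp_nat_mul]; norm_num
  · rw [_root_.zpow_neg, zpow_natCast, ← Real.exp_nat_mul, ← Real.exp_neg]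
    push_cast; ring_nf

lemma eigvec_pow {d : ℕ} (Mc : Matrix (Fin d) (Fin d) ℂ) (lam : ℂ) (u : Fin d → ℂ)
    (heig : Mc *ᵥ u = lam • u) (n : ℕ) : (Mc ^ n) *ᵥ u = lam ^ n • u := by
  induction n with
  | zero => simp
  | succ n ih =>
    rw [pow_succ, ← Matrix.mulVec_mulVec, heig, Matrix.mulVec_smul, ih, smul_smul, pow_succ,
      mul_comm]


end Helpers

open Polynomial Matrix in
/-- For `M ∈ GL_d(ℤ)` with `ρ(M) > 1` and irreducible characteristic polynomial, and any
nonzero `k ∈ ℤ^d`, there are `z₊ ∈ (ℂ*)^d`, `δ > 0` and an infinite `J₊ ⊆ ℤ_{≥0}` with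
bounded gaps such that `|z₊^{j.k}| > exp(δ e^{jμ₊})` for all `j ∈ J₊`. -/
theorem stmt_17 (d : ℕ) (hd : 2 ≤ d) (M : (Matrix (Fin d) (Fin d) ℤ)ˣ)
    (hrho : 1 < rhoM (M : Matrix (Fin d) (Fin d) ℤ))
    (hirr : Irreducible ((M : Matrix (Fin d) (Fin d) ℤ).charpoly.map (Int.castRingHom ℚ)))
    (μp : ℝ)
    (hμp : μp = Real.log (sSup {r : ℝ | ∃ lam : ℂ,
        IsEig (M : Matrix (Fin d) (Fin d) ℤ) lam ∧ r = ‖lam‖}))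
    (k : Fin d → ℤ) (hk : k ≠ 0) :
    ∃ zp ∈ torusPart d, ∃ δ > (0 : ℝ), ∃ Jp : Set ℤ,
      Jp ⊆ {j : ℤ | 0 ≤ j} ∧ Jp.Infinite ∧ BddGaps Jp ∧
      ∀ j ∈ Jp, ‖zpowVec zp
          (Matrix.vecMul k ((M ^ j : (Matrix (Fin d) (Fin d) ℤ)ˣ) : Matrix (Fin d) (Fin d) ℤ))‖
        > Real.exp (δ * Real.exp ((j : ℝ) * μp)) := by
  set Mz : Matrix (Fin d) (Fin d) ℤ := (M : Matrix (Fin d) (Fin d) ℤ) with hMz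
  set Mc : Matrix (Fin d) (Fin d) ℂ := Mz.map (Int.cast : ℤ → ℂ) with hMc
  set P : ℂ[X] := Mc.charpoly with hP
  have hPmonic : P.Monic := Mc.charpoly_monic
  have hP0 : P ≠ 0 := hPmonic.ne_zero
  have hPdeg : 0 < P.degree := by
    rw [hP, Matrix.charpoly_degree_eq_dim, Fintype.card_fin]
    exact_mod_cast (by omega : 0 < d)
  obtain ⟨z0, hz0⟩ := Complex.exists_root hPdeg
  have hz0mem : z0 ∈ P.roots.toFinset := by
    rw [Multiset.mem_toFinset, Polynomial.mem_roots hP0]; exact hz0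
  obtain ⟨lam0, hlam0mem, hlam0max⟩ :=
    Finset.exists_max_image P.roots.toFinset (fun z : ℂ => ‖z‖) ⟨z0, hz0mem⟩
  have hlam0root : P.IsRoot lam0 := by
    rw [Multiset.mem_toFinset, Polynomial.mem_roots hP0] at hlam0mem; exact hlam0mem
  set R : ℝ := ‖lam0‖ with hR
  have hRmax : ∀ lam : ℂ, P.IsRoot lam → ‖lam‖ ≤ R := by
    intro lam h
    exact hlam0max lam (by rw [Multiset.mem_toFinset, Polynomial.mem_roots hP0]; exact h)
  -- R positive
  have hdetu : IsUnit Mz.det := (Matrix.isUnit_iff_isUnit_det Mz).mp ⟨M, rfl⟩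
  have hR0 : 0 < R := by
    rcases eq_or_lt_of_le (norm_nonneg lam0) with h | h
    · exfalso
      have hlam00 : lam0 = 0 := by
        have := norm_eq_zero.mp h.symm; exact this
      have hdet : Mc.det = 0 := by
        rw [Matrix.det_eq_prod_roots_charpoly]
        apply Multiset.prod_eq_zero
        rw [← hlam00] at *
        rw [← hP]
        exact (Polynomial.mem_roots hP0).mpr hlam0root
      have : Mz.det = 0 := by
        have h2 : ((Mz.det : ℤ) : ℂ) = Mc.det := by
          simpa using RingHom.map_det (Int.castRingHom ℂ) Mz
        rw [hdet] at h2
        exact_mod_cast h2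
      rw [this] at hdetu
      simpa using hdetu
    · exact h
  -- sup identification
  have hsup : sSup {r : ℝ | ∃ lam : ℂ, IsEig Mz lam ∧ r = ‖lam‖} = R := by
    apply le_antisymm
    · apply csSup_le
      · exact ⟨R, ⟨lam0, hlam0root, hR⟩⟩
      · rintro r ⟨lam, hl, rfl⟩
        exact hRmax lam hl
    · apply le_csSup
      · refine ⟨R, ?_⟩
        rintro r ⟨lam, hl, rfl⟩
        exact hRmax lam hl
      · exact ⟨lam0, hlam0root, hR⟩
  have hμ : μp = Real.log R := by rw [hμp, hsup]
  -- eigenvector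
  obtain ⟨u, hu, heigu⟩ := exists_eigvec Mc lam0 hlam0root
  set kc : Fin d → ℂ := fun i => (k i : ℂ) with hkc
  have hc : kc ⬝ᵥ u ≠ 0 := dot_ne_zero hd Mz hirr k hk lam0 u hu heigu
  set c : ℂ := kc ⬝ᵥ u with hcdef
  set w : Fin d → ℂ := (starRingEnd ℂ) c • u with hw
  have heigw : Mc *ᵥ w = lam0 • w := by
    rw [hw, Matrix.mulVec_smul, heigu, smul_comm]
  set cr : ℝ := Complex.normSq c with hcr
  have hcr0 : 0 < cr := Complex.normSq_pos.mpr hc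
  have hcw : kc ⬝ᵥ w = (cr : ℂ) := by
    rw [hw, dotProduct_smul, ← hcdef, smul_eq_mul, mul_comm, Complex.mul_conj]
  set θ : ℝ := Complex.arg lam0 with hθ
  set v : Fin d → ℝ := fun i => (w i).re with hv
  -- the key growth identity
  have hkey : ∀ n : ℕ, (∑ i, ((k ᵥ* (Mz ^ n)) i : ℝ) * v i) = cr * (R ^ n * Real.cos (n * θ)) := by
    intro n
    set m : Fin d → ℤ := k ᵥ* (Mz ^ n) with hm
    have hmc : (fun i => ((m i : ℂ))) = kc ᵥ* (Mc ^ n) := by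
      funext j
      have := vecMul_map_comm (Int.castRingHom ℂ) k (Mz ^ n) j
      rw [map_matrix_pow] at this
      exact this
    have h2 : (kc ᵥ* (Mc ^ n)) ⬝ᵥ w = lam0 ^ n * (cr : ℂ) := by
      rw [← Matrix.dotProduct_mulVec, eigvec_pow Mc lam0 w heigw, dotProduct_smul,
        hcw, smul_eq_mul]
    have h3 : (∑ i, ((m i : ℝ)) * v i) = ((fun i => ((m i : ℂ))) ⬝ᵥ w).re := by
      rw [dotProduct, Complex.re_sum]
      congr 1
      funext i
      have : ((m i : ℂ)) = (((m i : ℝ) : ℂ)) := by push_cast; rfl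
      rw [this, Complex.re_ofReal_mul]
    rw [h3, hmc, h2]
    -- compute re of lam0^n * cr
    have h4 : lam0 ^ n = ((R ^ n : ℝ) : ℂ) * Complex.exp ((n * θ : ℝ) * Complex.I) := by
      conv_lhs => rw [← Complex.norm_mul_exp_arg_mul_I lam0]
      rw [mul_pow, ← Complex.exp_nat_mul]
      push_cast
      rw [hR, hθ]
      ring_nf
    rw [h4]
    rw [mul_comm _ ((cr : ℂ)), ← mul_assoc]
    have h5 : ((cr : ℂ)) * ((R ^ n : ℝ) : ℂ) = (((cr * R ^ n : ℝ)) : ℂ) := by push_cast; rfl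
    rw [h5, Complex.re_ofReal_mul, Complex.exp_ofReal_mul_I_re]
    ring
  -- choose z
  set zp : Fin d → ℂ := fun i => ((Real.exp (v i) : ℝ) : ℂ) with hzp
  have hzpt : zp ∈ torusPart d := by
    intro i
    simp [hzp, Complex.ofReal_ne_zero, Real.exp_ne_zero]
  have habs : ∀ m : Fin d → ℤ, ‖zpowVec zp m‖ = Real.exp (∑ i, (m i : ℝ) * v i) := by
    intro m
    rw [zpowVec, norm_prod]
    have : ∀ i, ‖zp i ^ m i‖ = Real.exp ((m i : ℝ) * v i) := by
      intro i
      rw [hzp, norm_zpow, Complex.norm_real, Real.norm_eq_abs, abs_of_pos (Real.exp_pos _), real_exp_zpow]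
    rw [Finset.prod_congr rfl (fun i _ => this i), ← Real.exp_sum]
  -- the set J
  obtain ⟨f, L, hfmono, hfpos, hfgap, hfcos⟩ := exists_seq θ
  refine ⟨zp, hzpt, cr / 4, by positivity, Set.range f, ?_, ?_, ?_, ?_⟩
  · rintro j ⟨mm, rfl⟩; exact hfpos mm
  · exact Set.infinite_range_of_injective hfmono.injective
  · refine ⟨L, ?_⟩
    rintro j ⟨mm, rfl⟩
    refine ⟨f (mm + 1), ⟨mm + 1, rfl⟩, (hfmono (by omega : mm < mm + 1)).ne', ?_⟩
    rw [abs_sub_comm, abs_of_nonneg (by linarith [(hfmono (by omega : mm < mm + 1)).le])]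
    exact hfgap mm
  · rintro j ⟨mm, rfl⟩
    set j : ℤ := f mm with hj
    have hj0 : 0 ≤ j := hfpos mm
    set n : ℕ := j.toNat with hn
    have hjn : (j : ℤ) = (n : ℤ) := by omega
    have hpowu : (M ^ j : (Matrix (Fin d) (Fin d) ℤ)ˣ) = M ^ n := by
      rw [hjn, zpow_natCast]
    have hpowm : ((M ^ j : (Matrix (Fin d) (Fin d) ℤ)ˣ) : Matrix (Fin d) (Fin d) ℤ) = Mz ^ n := by
      rw [hpowu, Units.val_pow_eq_pow_val, hMz]
    rw [hpowm, habs, hkey n]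
    have hcos : 1/2 ≤ Real.cos ((n : ℝ) * θ) := by
      have := hfcos mm
      have hcast : ((f mm : ℤ) : ℝ) = (n : ℝ) := by
        rw [← hj]; exact_mod_cast congrArg (Int.cast : ℤ → ℝ) hjn
      rwa [hcast] at this
    have hexp : Real.exp ((j : ℝ) * μp) = R ^ n := by
      have hjr : ((j : ℤ) : ℝ) = (n : ℝ) := by exact_mod_cast congrArg (Int.cast : ℤ → ℝ) hjn
      rw [hjr, hμ, Real.exp_nat_mul, Real.exp_log hR0]
    rw [hexp, gt_iff_lt, Real.exp_lt_exp]
    have hRn : 0 < R ^ n := pow_pos hR0 n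
    have h6 : R ^ n * (1/2) ≤ R ^ n * Real.cos ((n:ℝ) * θ) :=
      mul_le_mul_of_nonneg_left hcos hRn.le
    have h7 : cr * (R ^ n * (1/2)) ≤ cr * (R ^ n * Real.cos ((n:ℝ) * θ)) :=
      mul_le_mul_of_nonneg_left h6 hcr0.le
    nlinarith
end
end
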